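/- Let ρ be a density matrix, U a unitary with U·ρ·U† = ρ, and O a Hermitian matrix with U·O·U† = −O. Assume tr(ρ·O²) ≥ (μ·o·N)² where μ, o, N > 0 are reals. Define the symmetry-breaking perturbation operators Õ^± := (1 ± O/√(tr(ρ·O²)))/√2. Then tr(ρ · Õ^± · O · Õ^±) = ±√(tr(ρ·O²)); in particular |tr(ρ · Õ^± · O · Õ^±)| ≥ μ·o·N, so the states defined by Õ^± break the symmetry with an extensive value of the order parameter. -/

import Mathlib

open Matrix
open scoped ComplexOrder

/-- If `ρ` is invariant under the unitary `U` and `U` flips the sign of `A`,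
then `tr(ρA) = 0`. -/
lemma trace_eq_zero_of_sign_flip
    {n : Type*} [Fintype n] [DecidableEq n]
    (ρ U A : Matrix n n ℂ) (hU : U ∈ Matrix.unitaryGroup n ℂ)
    (hUρ : U * ρ * Uᴴ = ρ) (hUA : U * A * Uᴴ = -A) :
    (ρ * A).trace = 0 := by
  have hU1 : Uᴴ * U = 1 := by
    simpa [Matrix.star_eq_conjTranspose] using hU.1
  have key : Uᴴ * A * U = -A := by
    have h : A = -(U * A * Uᴴ) := by rw [hUA, neg_neg]
    calc Uᴴ * A * U = Uᴴ * (-(U * A * Uᴴ)) * U := by rw [← h]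
      _ = -((Uᴴ * U) * A * (Uᴴ * U)) := by
          simp only [Matrix.mul_neg, Matrix.neg_mul, Matrix.mul_assoc]
      _ = -A := by rw [hU1]; simp
  have hcalc : (ρ * A).trace = -(ρ * A).trace := by
    calc (ρ * A).trace = ((U * ρ * Uᴴ) * A).trace := by rw [hUρ]
      _ = ((ρ * (Uᴴ * A * U))).trace := by
          simp only [Matrix.mul_assoc]
          rw [Matrix.trace_mul_comm U]
          simp only [Matrix.mul_assoc]
      _ = -(ρ * A).trace := by rw [key]; simp
  linear_combination hcalc / 2

theorem symmetry_breaking_order_parameter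
    {n : Type*} [Fintype n] [DecidableEq n] [Nonempty n]
    (ρ : Matrix n n ℂ) (hρ : ρ.PosSemidef) (hρtr : ρ.trace = 1)
    (U : Matrix n n ℂ) (hU : U ∈ Matrix.unitaryGroup n ℂ)
    (hUρ : U * ρ * Uᴴ = ρ)
    (O : Matrix n n ℂ) (hO : Oᴴ = O)
    (hUO : U * O * Uᴴ = -O)
    (μ o N : ℝ) (hμ : 0 < μ) (ho : 0 < o) (hN : 0 < N)
    (hfluc : ((μ * o * N) ^ 2 : ℂ) ≤ (ρ * (O * O)).trace) :
    (ρ * ((Real.sqrt 2 : ℂ)⁻¹ •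
          (1 + ((Real.sqrt ((ρ * (O * O)).trace.re) : ℂ))⁻¹ • O)) * O *
        ((Real.sqrt 2 : ℂ)⁻¹ •
          (1 + ((Real.sqrt ((ρ * (O * O)).trace.re) : ℂ))⁻¹ • O))).trace
      = (Real.sqrt ((ρ * (O * O)).trace.re) : ℂ) ∧
    (ρ * ((Real.sqrt 2 : ℂ)⁻¹ •
          (1 - ((Real.sqrt ((ρ * (O * O)).trace.re) : ℂ))⁻¹ • O)) * O *
        ((Real.sqrt 2 : ℂ)⁻¹ •
          (1 - ((Real.sqrt ((ρ * (O * O)).trace.re) : ℂ))⁻¹ • O))).trace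
      = -(Real.sqrt ((ρ * (O * O)).trace.re) : ℂ) ∧
    μ * o * N ≤ ‖
      (ρ * ((Real.sqrt 2 : ℂ)⁻¹ •
          (1 + ((Real.sqrt ((ρ * (O * O)).trace.re) : ℂ))⁻¹ • O)) * O *
        ((Real.sqrt 2 : ℂ)⁻¹ •
          (1 + ((Real.sqrt ((ρ * (O * O)).trace.re) : ℂ))⁻¹ • O))).trace‖ ∧
    μ * o * N ≤ ‖
      (ρ * ((Real.sqrt 2 : ℂ)⁻¹ •
          (1 - ((Real.sqrt ((ρ * (O * O)).trace.re) : ℂ))⁻¹ • O)) * O *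
        ((Real.sqrt 2 : ℂ)⁻¹ •
          (1 - ((Real.sqrt ((ρ * (O * O)).trace.re) : ℂ))⁻¹ • O))).trace‖ := by
  have hU1 : Uᴴ * U = 1 := by
    simpa [Matrix.star_eq_conjTranspose] using hU.1
  have hU1' : ∀ X : Matrix n n ℂ, Uᴴ * (U * X) = X := fun X => by
    rw [← Matrix.mul_assoc, hU1, Matrix.one_mul]
  -- U flips the sign of O³ as well
  have hUO3 : U * (O * (O * O)) * Uᴴ = -(O * (O * O)) := by
    have h : U * (O * (O * O)) * Uᴴ = (U * O * Uᴴ) * ((U * O * Uᴴ) * (U * O * Uᴴ)) := by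
      simp only [Matrix.mul_assoc, hU1']
    rw [h, hUO]
    simp only [Matrix.mul_neg, Matrix.neg_mul, neg_neg]
  have h0 : (ρ * O).trace = 0 := trace_eq_zero_of_sign_flip ρ U O hU hUρ hUO
  have h3 : (ρ * (O * (O * O))).trace = 0 :=
    trace_eq_zero_of_sign_flip ρ U (O * (O * O)) hU hUρ hUO3
  set t : ℂ := (ρ * (O * O)).trace with ht
  have hfluc' : (((μ * o * N) ^ 2 : ℝ) : ℂ) ≤ t := by
    push_cast
    exact hfluc
  have hre : (μ * o * N) ^ 2 ≤ t.re := by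
    have h := (Complex.le_def.mp hfluc').1
    rwa [Complex.ofReal_re] at h
  have him : t.im = 0 := by
    have h := (Complex.le_def.mp hfluc').2
    rw [Complex.ofReal_im] at h
    exact h.symm
  have htre : ((t.re : ℝ) : ℂ) = t := Complex.ext rfl (by simp [him])
  have hμoN : 0 < μ * o * N := by positivity
  have htrepos : 0 < t.re := lt_of_lt_of_le (by positivity) hre
  set s : ℝ := Real.sqrt t.re with hs
  have hspos : 0 < s := Real.sqrt_pos.mpr htrepos
  have hs2 : s ^ 2 = t.re := Real.sq_sqrt htrepos.le
  have hsC : (s : ℂ) ≠ 0 := by exact_mod_cast hspos.ne'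
  -- general expansion
  have expand : ∀ ε : ℂ,
      (ρ * ((Real.sqrt 2 : ℂ)⁻¹ • (1 + ε • O)) * O *
        ((Real.sqrt 2 : ℂ)⁻¹ • (1 + ε • O))).trace
        = (Real.sqrt 2 : ℂ)⁻¹ * (Real.sqrt 2 : ℂ)⁻¹ * (2 * ε * t) := by
    intro ε
    simp only [Matrix.smul_mul, Matrix.mul_smul, Matrix.mul_add, Matrix.add_mul,
      Matrix.mul_one, Matrix.one_mul, Matrix.trace_smul, Matrix.trace_add,
      smul_smul, smul_eq_mul, Matrix.mul_assoc]
    rw [h0, h3]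
    ring
  have h2 : (Real.sqrt 2 : ℂ)⁻¹ * (Real.sqrt 2 : ℂ)⁻¹ * 2 = 1 := by
    have : ((Real.sqrt 2 : ℝ) : ℂ) * ((Real.sqrt 2 : ℝ) : ℂ) = 2 := by
      rw [← Complex.ofReal_mul, Real.mul_self_sqrt (by norm_num)]
      norm_num
    rw [← mul_inv, this]
    norm_num
  have hval : ∀ ε : ℂ,
      (ρ * ((Real.sqrt 2 : ℂ)⁻¹ • (1 + ε • O)) * O *
        ((Real.sqrt 2 : ℂ)⁻¹ • (1 + ε • O))).trace = ε * t := by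
    intro ε
    rw [expand ε]
    calc (Real.sqrt 2 : ℂ)⁻¹ * (Real.sqrt 2 : ℂ)⁻¹ * (2 * ε * t)
        = ((Real.sqrt 2 : ℂ)⁻¹ * (Real.sqrt 2 : ℂ)⁻¹ * 2) * (ε * t) := by ring
      _ = ε * t := by rw [h2, one_mul]
  have hst : ((s : ℂ))⁻¹ * t = (s : ℂ) := by
    have : t = (s : ℂ) * (s : ℂ) := by
      rw [← htre, ← hs2]
      push_cast
      ring
    rw [this, ← mul_assoc, inv_mul_cancel₀ hsC, one_mul]
  have hplus : (ρ * ((Real.sqrt 2 : ℂ)⁻¹ • (1 + ((s : ℝ) : ℂ)⁻¹ • O)) * O *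
      ((Real.sqrt 2 : ℂ)⁻¹ • (1 + ((s : ℝ) : ℂ)⁻¹ • O))).trace = (s : ℂ) := by
    rw [hval ((s : ℂ))⁻¹, hst]
  have hminus : (ρ * ((Real.sqrt 2 : ℂ)⁻¹ • (1 - ((s : ℝ) : ℂ)⁻¹ • O)) * O *
      ((Real.sqrt 2 : ℂ)⁻¹ • (1 - ((s : ℝ) : ℂ)⁻¹ • O))).trace = -(s : ℂ) := by
    have h' := hval (-((s : ℂ))⁻¹)
    simp only [neg_smul, ← sub_eq_add_neg] at h'
    rw [h', neg_mul, hst]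
  have hbound : μ * o * N ≤ s := by
    rw [hs]
    exact (Real.le_sqrt hμoN.le htrepos.le).mpr hre
  refine ⟨hplus, hminus, ?_, ?_⟩
  · rw [hplus]
    simpa [Complex.norm_real, abs_of_pos hspos] using hbound
  · rw [hminus]
    simpa [Complex.norm_real, abs_of_pos hspos] using hbound
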